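/- arXiv:1912.05852 — 2 statements merged into one kernel-verified Lean document; each statement's English description precedes it below -/
import Mathlib

section
/- Let a_n(x) = ((x−1)(x²−1)⋯(xⁿ−1))^{r−1} in ℤ[x] with r ≥ 2, and define b_n(x) by (1 + Σ a_n tⁿ)(1 + Σ b_n tⁿ) = 1 in ℤ[x][[t]]. Then for every n ≥ 1, the polynomial (x−1)^{n(r−1)} divides b_n(x). -/
open Polynomial

/-- With `aₙ(x) = ((x−1)(x²−1)⋯(xⁿ−1))^{r−1}` (r ≥ 2) and `bₙ` the coefficients of the
formal inverse power series, `(x−1)^{n(r−1)}` divides `bₙ(x)` for all `n ≥ 1`. -/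
theorem stmt_7 (r : ℕ) (hr : 2 ≤ r) (a b : ℕ → Polynomial ℤ)
    (ha : ∀ n, a n = ∏ j ∈ Finset.Icc 1 n, ((X : Polynomial ℤ) ^ j - 1) ^ (r - 1))
    (hb0 : b 0 = 1)
    (h : (PowerSeries.mk a) * (PowerSeries.mk b) = 1) :
    ∀ n, 1 ≤ n → ((X : Polynomial ℤ) - 1) ^ (n * (r - 1)) ∣ b n := by
  have ha0 : a 0 = 1 := by simp [ha]
  have had : ∀ i, ((X : Polynomial ℤ) - 1) ^ (i * (r - 1)) ∣ a i := by
    intro i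
    rw [ha]
    have he : ((X : Polynomial ℤ) - 1) ^ (i * (r - 1)) =
        ∏ _j ∈ Finset.Icc 1 i, ((X : Polynomial ℤ) - 1) ^ (r - 1) := by
      rw [Finset.prod_const, ← pow_mul, Nat.card_Icc]
      rw [Nat.add_sub_cancel, Nat.mul_comm]
    rw [he]
    apply Finset.prod_dvd_prod_of_dvd
    intro j _
    exact pow_dvd_pow_of_dvd (by simpa using sub_dvd_pow_sub_pow (X : Polynomial ℤ) 1 j) _
  intro n
  induction n using Nat.strong_induction_on with
  | _ n ih =>
    intro hn
    have hc := congrArg (PowerSeries.coeff (R := Polynomial ℤ) n) h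
    rw [PowerSeries.coeff_mul, PowerSeries.coeff_one, if_neg (by omega)] at hc
    simp only [PowerSeries.coeff_mk] at hc
    rw [Finset.Nat.sum_antidiagonal_eq_sum_range_succ_mk, Finset.sum_range_succ'] at hc
    rw [ha0, one_mul, Nat.sub_zero] at hc
    have hbn : b n = -∑ k ∈ Finset.range n, a (k + 1) * b (n - (k + 1)) :=
      eq_neg_of_add_eq_zero_right hc
    rw [hbn]
    rw [dvd_neg]
    apply Finset.dvd_sum
    intro k hk
    have hkn : k + 1 ≤ n := Finset.mem_range.mp hk
    have hdb : ((X : Polynomial ℤ) - 1) ^ ((n - (k + 1)) * (r - 1)) ∣ b (n - (k + 1)) := by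
      rcases Nat.eq_zero_or_pos (n - (k + 1)) with h0 | h1
      · rw [h0]; simp [hb0]
      · exact ih _ (by omega) h1
    have hsplit : n * (r - 1) = (k + 1) * (r - 1) + (n - (k + 1)) * (r - 1) := by
      rw [← add_mul]
      congr 1
      omega
    rw [hsplit, pow_add]
    exact mul_dvd_mul (had (k + 1)) hdb
end

section
/- Given polynomials f_n(x) ∈ ℚ[x] for n ≥ 1, the coefficient of tⁿ in PLog(1 + Σ_{n≥1} f_n(x) tⁿ) := Ψ⁻¹(log(1 + Σ f_n tⁿ)) equals Σ_{d | n} Σ_{[k] ∈ 𝒫_d} (μ(n/d)/(n/d)) · ((−1)^{|[k]|−1}/|[k]|) · multinomial(|[k]|; k_1,…,k_d) · ∏_{j=1}^{d} f_j(x^{n/d})^{k_j}. -/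
/-- The operator `Ψ⁻¹` on `t·ℚ[x][[t]]`, determined `ℚ`-linearly by
`Ψ⁻¹(xʲ tᵏ) = Σ_{l≥1} (μ(l)/l) x^{jl} t^{kl}`. -/
noncomputable def adamsInv (f : PowerSeries (Polynomial ℚ)) : PowerSeries (Polynomial ℚ) :=
  PowerSeries.mk fun m => ∑ l ∈ m.divisors,
    Polynomial.C ((ArithmeticFunction.moebius l : ℚ) / l) *
      ((PowerSeries.coeff (R := Polynomial ℚ) (m / l) f).comp (Polynomial.X ^ l))

/-- The formal logarithm on `1 + t·ℚ[x][[t]]`: `log F = Σ_{i≥1} (−1)^{i−1} (F−1)^i / i`. -/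
noncomputable def plog (F : PowerSeries (Polynomial ℚ)) : PowerSeries (Polynomial ℚ) :=
  PowerSeries.mk fun m => ∑ i ∈ Finset.Icc 1 m,
    Polynomial.C ((-1 : ℚ) ^ (i - 1) / i) * (PowerSeries.coeff (R := Polynomial ℚ) m ((F - 1) ^ i))


section Aux
open Finset

private lemma coeff_pow_congr {A B : PowerSeries (Polynomial ℚ)} (i : ℕ) (m : ℕ)
    (h : ∀ r ≤ m, PowerSeries.coeff r A = PowerSeries.coeff r B) :
    PowerSeries.coeff (R := Polynomial ℚ) m (A ^ i) = PowerSeries.coeff (R := Polynomial ℚ) m (B ^ i) := by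
  induction i generalizing m with
  | zero => simp
  | succ i ih =>
    rw [pow_succ, pow_succ, PowerSeries.coeff_mul, PowerSeries.coeff_mul]
    refine Finset.sum_congr rfl fun x hx => ?_
    rw [Finset.HasAntidiagonal.mem_antidiagonal] at hx
    rw [ih x.1 (fun r hr => h r (hr.trans (by omega))), h x.2 (by omega)]

private lemma coeff_P_pow (f : ℕ → Polynomial ℚ) (d i : ℕ) :
    PowerSeries.coeff (R := Polynomial ℚ) d
        ((∑ j ∈ Icc 1 d, PowerSeries.C (R := Polynomial ℚ) (f j) * PowerSeries.X ^ j) ^ i) =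
      ∑ k ∈ (piAntidiag (Icc 1 d) i).filter (fun k => ∑ j ∈ Icc 1 d, j * k j = d),
        (Nat.multinomial (Icc 1 d) k : Polynomial ℚ) * ∏ j ∈ Icc 1 d, f j ^ k j := by
  rw [Finset.sum_pow_eq_sum_piAntidiag, map_sum, Finset.sum_filter]
  refine Finset.sum_congr rfl fun k hk => ?_
  have h1 : ∀ j, (PowerSeries.C (R := Polynomial ℚ) (f j) * PowerSeries.X ^ j) ^ k j
      = PowerSeries.C (R := Polynomial ℚ) (f j ^ k j) * PowerSeries.X ^ (j * k j) := by
    intro j; rw [mul_pow, ← map_pow, ← pow_mul]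
  simp_rw [h1]
  rw [Finset.prod_mul_distrib, ← map_prod, Finset.prod_pow_eq_pow_sum,
    ← map_natCast (PowerSeries.C (R := Polynomial ℚ)) (Nat.multinomial (Icc 1 d) k),
    ← mul_assoc, ← map_mul, PowerSeries.coeff_C_mul_X_pow]
  by_cases h : ∑ j ∈ Icc 1 d, j * k j = d
  · simp [h, eq_comm]
  · rw [if_neg h, if_neg (Ne.symm h)]

private lemma msum_sum {ι : Type*} (s : Finset ι) (m : ι → Multiset ℕ) :
    (∑ i ∈ s, m i).sum = ∑ i ∈ s, (m i).sum := by
  classical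
  induction s using Finset.cons_induction with
  | empty => simp
  | cons a s ha ih => rw [Finset.sum_cons, Finset.sum_cons, ← ih]; simp

private lemma mcard_sum {ι : Type*} (s : Finset ι) (m : ι → Multiset ℕ) :
    Multiset.card (∑ i ∈ s, m i) = ∑ i ∈ s, Multiset.card (m i) := by
  classical
  induction s using Finset.cons_induction with
  | empty => simp
  | cons a s ha ih => rw [Finset.sum_cons, Finset.sum_cons, ← ih]; simp

private lemma parts_mem_Icc {d : ℕ} (p : Nat.Partition d) {a : ℕ} (ha : a ∈ p.parts) :
    a ∈ Icc 1 d := by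
  obtain ⟨t, ht⟩ := Multiset.exists_cons_of_mem ha
  refine Finset.mem_Icc.2 ⟨p.parts_pos ha, ?_⟩
  have : a + t.sum = d := by rw [← p.parts_sum, ht, Multiset.sum_cons]
  omega

private lemma count_card {d : ℕ} (p : Nat.Partition d) :
    ∑ j ∈ Icc 1 d, Multiset.count j p.parts = Multiset.card p.parts :=
  Multiset.sum_count_eq_card fun _ ha => parts_mem_Icc p ha

private lemma parts_eq_sum_rep {d : ℕ} (p : Nat.Partition d) :
    ∑ j ∈ Icc 1 d, Multiset.replicate (Multiset.count j p.parts) j = p.parts := by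
  simp_rw [← Multiset.nsmul_singleton]
  conv_rhs => rw [← Multiset.toFinset_sum_count_nsmul_eq p.parts]
  symm
  apply Finset.sum_subset
  · intro a ha; exact parts_mem_Icc p (Multiset.mem_toFinset.1 ha)
  · intro a _ ha
    rw [Multiset.count_eq_zero_of_notMem (fun h => ha (Multiset.mem_toFinset.2 h)), zero_smul]

private lemma count_weight {d : ℕ} (p : Nat.Partition d) :
    ∑ j ∈ Icc 1 d, j * Multiset.count j p.parts = d := by
  conv_rhs => rw [← p.parts_sum, ← parts_eq_sum_rep p]
  rw [msum_sum]
  exact Finset.sum_congr rfl fun j _ => by simp [Multiset.sum_replicate, mul_comm]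

private lemma card_mem_Icc {d : ℕ} (hd : 1 ≤ d) (p : Nat.Partition d) :
    Multiset.card p.parts ∈ Icc 1 d := by
  refine Finset.mem_Icc.2 ⟨?_, ?_⟩
  · rw [Nat.one_le_iff_ne_zero]
    intro h
    rw [Multiset.card_eq_zero] at h
    have h2 := p.parts_sum
    rw [h] at h2
    simp at h2
    omega
  · calc Multiset.card p.parts = ∑ j ∈ Icc 1 d, Multiset.count j p.parts := (count_card p).symm
      _ ≤ ∑ j ∈ Icc 1 d, j * Multiset.count j p.parts :=
          Finset.sum_le_sum fun j hj =>
            Nat.le_mul_of_pos_left _ (Finset.mem_Icc.1 hj).1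
      _ = d := count_weight p

private def mkPart (d : ℕ) (k : ℕ → ℕ)
    (hsum : ∑ j ∈ Icc 1 d, j * k j = d) : Nat.Partition d where
  parts := ∑ j ∈ Icc 1 d, Multiset.replicate (k j) j
  parts_pos := by
    intro a ha
    rw [Multiset.mem_sum] at ha
    obtain ⟨j, hj, haj⟩ := ha
    rw [Multiset.eq_of_mem_replicate haj]
    exact (Finset.mem_Icc.1 hj).1
  parts_sum := by
    rw [msum_sum]
    simp_rw [Multiset.sum_replicate, smul_eq_mul]
    conv_rhs => rw [← hsum]
    exact Finset.sum_congr rfl fun j _ => mul_comm _ _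

private lemma count_mkPart (d : ℕ) (k : ℕ → ℕ) (hsum : ∑ j ∈ Icc 1 d, j * k j = d)
    (hsupp : ∀ j, k j ≠ 0 → j ∈ Icc 1 d) (a : ℕ) :
    Multiset.count a (mkPart d k hsum).parts = k a := by
  show Multiset.count a (∑ j ∈ Icc 1 d, Multiset.replicate (k j) j) = k a
  rw [Multiset.count_sum']
  simp_rw [Multiset.count_replicate]
  rw [Finset.sum_ite_eq' (Icc 1 d) a k]
  by_cases h : a ∈ Icc 1 d
  · rw [if_pos h]
  · rw [if_neg h]
    by_contra hk
    exact h (hsupp a (Ne.symm hk))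

private lemma card_mkPart (d : ℕ) (k : ℕ → ℕ) (hsum : ∑ j ∈ Icc 1 d, j * k j = d) :
    Multiset.card (mkPart d k hsum).parts = ∑ j ∈ Icc 1 d, k j := by
  show Multiset.card (∑ j ∈ Icc 1 d, Multiset.replicate (k j) j) = _
  rw [mcard_sum]
  simp

private lemma coeff_plog (f : ℕ → Polynomial ℚ) (F : PowerSeries (Polynomial ℚ))
    (hF : F = 1 + PowerSeries.mk fun k => if k = 0 then 0 else f k)
    (d : ℕ) (hd : 1 ≤ d) :
    PowerSeries.coeff (R := Polynomial ℚ) d (plog F) =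
      ∑ p : Nat.Partition d,
        Polynomial.C (((-1 : ℚ) ^ (Multiset.card p.parts - 1) / (Multiset.card p.parts : ℚ)) *
            (Nat.multinomial (Icc 1 d) (fun j => Multiset.count j p.parts) : ℚ)) *
          ∏ j ∈ Icc 1 d, f j ^ Multiset.count j p.parts := by
  have hF1 : ∀ r ≤ d, PowerSeries.coeff (R := Polynomial ℚ) r (F - 1)
      = PowerSeries.coeff (R := Polynomial ℚ) r
          (∑ j ∈ Icc 1 d, PowerSeries.C (R := Polynomial ℚ) (f j) * PowerSeries.X ^ j) := by
    intro r hr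
    rw [hF, add_sub_cancel_left, PowerSeries.coeff_mk, map_sum]
    simp_rw [PowerSeries.coeff_C_mul_X_pow]
    rw [Finset.sum_ite_eq (Icc 1 d) r f]
    rcases Nat.eq_zero_or_pos r with h | h
    · simp [h]
    · rw [if_pos (Finset.mem_Icc.2 ⟨h, hr⟩), if_neg (by omega)]
  have key : ∀ i, PowerSeries.coeff (R := Polynomial ℚ) d ((F - 1) ^ i)
      = ∑ k ∈ (piAntidiag (Icc 1 d) i).filter (fun k => ∑ j ∈ Icc 1 d, j * k j = d),
        (Nat.multinomial (Icc 1 d) k : Polynomial ℚ) * ∏ j ∈ Icc 1 d, f j ^ k j := by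
    intro i
    rw [coeff_pow_congr i d hF1, coeff_P_pow]
  rw [plog, PowerSeries.coeff_mk]
  simp_rw [key, Finset.mul_sum]
  rw [Finset.sum_sigma']
  refine Finset.sum_bij'
    (fun x hx => mkPart d x.2 ((Finset.mem_filter.1 (Finset.mem_sigma.1 hx).2).2))
    (fun p _ => ⟨Multiset.card p.parts, fun j => Multiset.count j p.parts⟩)
    (fun x hx => Finset.mem_univ _) ?_ ?_ ?_ ?_
  · intro p _
    refine Finset.mem_sigma.2 ⟨card_mem_Icc hd p, Finset.mem_filter.2 ⟨?_, count_weight p⟩⟩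
    refine Finset.mem_piAntidiag.2 ⟨count_card p, fun j hj => ?_⟩
    exact parts_mem_Icc p (Multiset.count_pos.1 (Nat.pos_of_ne_zero hj))
  · rintro ⟨i, k⟩ hx
    have hmem := Finset.mem_sigma.1 hx
    have hpi := Finset.mem_piAntidiag.1 (Finset.mem_filter.1 hmem.2).1
    have hw := (Finset.mem_filter.1 hmem.2).2
    refine Sigma.ext ?_ ?_
    · exact (card_mkPart d k hw).trans hpi.1
    · exact heq_of_eq (funext fun a => count_mkPart d k hw hpi.2 a)
  · intro p _
    exact Nat.Partition.ext (parts_eq_sum_rep p)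
  · rintro ⟨i, k⟩ hx
    have hmem := Finset.mem_sigma.1 hx
    have hpi := Finset.mem_piAntidiag.1 (Finset.mem_filter.1 hmem.2).1
    have hw := (Finset.mem_filter.1 hmem.2).2
    have hcount : ∀ a, Multiset.count a (mkPart d k hw).parts = k a :=
      count_mkPart d k hw hpi.2
    have hcard : Multiset.card (mkPart d k hw).parts = i :=
      (card_mkPart d k hw).trans hpi.1
    simp only [hcount, hcard]
    rw [Polynomial.C_mul, Polynomial.C_eq_natCast]
    ring

end Aux

/-- Given `f_n ∈ ℚ[x]`, the coefficient of `tⁿ` in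
`PLog(1 + Σ_{n≥1} f_n tⁿ) = Ψ⁻¹(log(1 + Σ f_n tⁿ))` equals
`Σ_{d ∣ n} Σ_{[k] ∈ 𝒫_d} (μ(n/d)/(n/d)) ((−1)^{|[k]|−1}/|[k]|)
  multinomial(|[k]|; k₁,…,k_d) ∏_{j=1}^d f_j(x^{n/d})^{k_j}`. -/


theorem stmt_13 (f : ℕ → Polynomial ℚ) (F : PowerSeries (Polynomial ℚ))
    (hF : F = 1 + PowerSeries.mk fun k => if k = 0 then 0 else f k)
    (n : ℕ) (hn : 1 ≤ n) :
    PowerSeries.coeff (R := Polynomial ℚ) n (adamsInv (plog F)) =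
      ∑ d ∈ n.divisors, ∑ p : Nat.Partition d,
        Polynomial.C
          ((ArithmeticFunction.moebius (n / d) : ℚ) / ((n / d : ℕ) : ℚ) *
            ((-1 : ℚ) ^ (Multiset.card p.parts - 1) / (Multiset.card p.parts : ℚ)) *
            (Nat.multinomial (Finset.Icc 1 d) (fun j => Multiset.count j p.parts) : ℚ)) *
          ∏ j ∈ Finset.Icc 1 d, ((f j).comp (Polynomial.X ^ (n / d))) ^
            (Multiset.count j p.parts) := by
  rw [adamsInv, PowerSeries.coeff_mk,
    ← Nat.sum_div_divisors n (fun l => Polynomial.C ((ArithmeticFunction.moebius l : ℚ) / l) *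
      ((PowerSeries.coeff (R := Polynomial ℚ) (n / l) (plog F)).comp (Polynomial.X ^ l)))]
  refine Finset.sum_congr rfl fun d hd => ?_
  obtain ⟨hdvd, hn0⟩ := Nat.mem_divisors.1 hd
  have hd1 : 1 ≤ d := Nat.pos_of_mem_divisors hd
  rw [Nat.div_div_self hdvd hn0, coeff_plog f F hF d hd1]
  rw [Polynomial.sum_comp, Finset.mul_sum]
  refine Finset.sum_congr rfl fun p _ => ?_
  rw [Polynomial.mul_comp, Polynomial.C_comp, Polynomial.prod_comp]
  simp_rw [Polynomial.pow_comp]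
  rw [← mul_assoc, ← Polynomial.C_mul]
  ring_nf
end
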